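/- arXiv:1911.08918 — 2 statements merged into one kernel-verified Lean document; each statement's English description precedes it below -/
import Mathlib

section
/- Let R be a Noetherian ring containing an infinite field k as a subring, and let M be a finitely generated R-module generated by x_1, ..., x_n. For a prime ideal p of R write M(p) = M_p/pM_p, R(p) = R_p/pR_p, and for x in M let x(p) denote the image of x in M(p). Let P be a subset of Supp_R M, let x, y be elements of M, and set P' = { p in P : x(p) and y(p) are linearly dependent over R(p) }. If P' is finite and, for every p in P', either x(p) ≠ 0 or y(p) ≠ 0, then there exists an element a in k such that (x + a y)(p) is nonzero for all p in P. -/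
open TensorProduct

variable {R : Type*} [CommRing R]

/-- The residue field `R(p) = R_p / p R_p` of a prime `p`. -/
noncomputable abbrev resField (p : PrimeSpectrum R) : Type _ :=
  IsLocalRing.ResidueField (Localization.AtPrime p.asIdeal)

/-- The fiber `M(p) = M_p / p M_p` of a module `M` at a prime `p`,
realized as `R(p) ⊗[R] M`. -/
noncomputable def fiber (p : PrimeSpectrum R) (M : Type*) [AddCommGroup M] [Module R M] :
    Type _ :=
  resField p ⊗[R] M

noncomputable instance (p : PrimeSpectrum R) (M : Type*) [AddCommGroup M] [Module R M] :
    AddCommGroup (fiber p M) := inferInstanceAs (AddCommGroup (resField p ⊗[R] M))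

noncomputable instance (p : PrimeSpectrum R) (M : Type*) [AddCommGroup M] [Module R M] :
    Module (resField p) (fiber p M) := inferInstanceAs (Module (resField p) (resField p ⊗[R] M))

/-- The canonical image `x(p)` of `x ∈ M` in the fiber `M(p)`. -/
noncomputable def fiberImg (p : PrimeSpectrum R) {M : Type*} [AddCommGroup M] [Module R M]
    (x : M) : fiber p M :=
  (1 : resField p) ⊗ₜ[R] x

noncomputable instance (p : PrimeSpectrum R) (M : Type*) [AddCommGroup M] [Module R M] :
    Module R (fiber p M) := inferInstanceAs (Module R (resField p ⊗[R] M))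

instance (p : PrimeSpectrum R) (M : Type*) [AddCommGroup M] [Module R M] :
    IsScalarTower R (resField p) (fiber p M) :=
  inferInstanceAs (IsScalarTower R (resField p) (resField p ⊗[R] M))

lemma fiberImg_add_smul (p : PrimeSpectrum R) {M : Type*} [AddCommGroup M] [Module R M]
    (x y : M) (c : R) :
    fiberImg p (x + c • y) =
      fiberImg p x + algebraMap R (resField p) c • fiberImg p y := by
  show ((1 : resField p) ⊗ₜ[R] (x + c • y) : resField p ⊗[R] M) = _
  rw [tmul_add, tmul_smul, algebraMap_smul]
  rfl

/-- **Lemma 2.1(1).** Let `R` be a Noetherian ring containing an infinite field `k` as a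
subring and `M` a finitely generated `R`-module generated by `x₁, …, xₙ`.  Let `P` be a
subset of `Supp_R M`, let `x, y ∈ M` and let
`P' = {p ∈ P | x(p), y(p) are linearly dependent over R(p)}`.  If `P'` is finite and for
every `p ∈ P'` either `x(p) ≠ 0` or `y(p) ≠ 0`, then there is `a ∈ k` with
`(x + a y)(p) ≠ 0` for all `p ∈ P`. -/
theorem stmt0 [IsNoetherianRing R] [Nontrivial R]
    (k : Type*) [Field k] [Infinite k] [Algebra k R]
    (M : Type*) [AddCommGroup M] [Module R M] [Module.Finite R M]
    {n : ℕ} (xs : Fin n → M) (hgen : Submodule.span R (Set.range xs) = ⊤)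
    (P : Set (PrimeSpectrum R)) (hP : P ⊆ Module.support R M)
    (x y : M)
    (P' : Set (PrimeSpectrum R))
    (hP' : P' = {p ∈ P | ¬ LinearIndependent (resField p) ![fiberImg p x, fiberImg p y]})
    (hfin : P'.Finite)
    (hnz : ∀ p ∈ P', fiberImg p x ≠ 0 ∨ fiberImg p y ≠ 0) :
    ∃ a : k, ∀ p ∈ P, fiberImg p (x + algebraMap k R a • y) ≠ 0 := by
  -- the composite field embedding k → R(p)
  set φ : ∀ p : PrimeSpectrum R, k →+* resField p :=
    fun p => (algebraMap R (resField p)).comp (algebraMap k R) with hφ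
  -- bad values for a fixed prime
  set B : PrimeSpectrum R → Set k :=
    fun p => {a : k | fiberImg p x + φ p a • fiberImg p y = 0} with hB
  have hBsub : ∀ p ∈ P', (B p).Subsingleton := by
    intro p hp a ha b hb
    simp only [hB, Set.mem_setOf_eq] at ha hb
    by_cases hy : fiberImg p y = 0
    · exfalso
      have hx : fiberImg p x ≠ 0 := by
        rcases hnz p hp with h | h
        · exact h
        · exact absurd hy h
      apply hx
      rw [hy, smul_zero, add_zero] at ha
      exact ha
    · have : (φ p a - φ p b) • fiberImg p y = 0 := by
        have := ha.trans hb.symm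
        rw [sub_smul]
        have h2 : φ p a • fiberImg p y = φ p b • fiberImg p y := by
          have := congrArg (fun z => z - fiberImg p x) this
          simpa [add_sub_cancel_left, add_comm] using this
        rw [h2, sub_self]
      have h3 : φ p a - φ p b = 0 := by
        by_contra h
        exact hy (by simpa [h] using smul_eq_zero.mp this)
      have h4 : φ p a = φ p b := sub_eq_zero.mp h3
      exact (φ p).injective (by exact_mod_cast h4)
  have hBfin : (⋃ p ∈ P', B p).Finite :=
    Set.Finite.biUnion hfin (fun p hp => (hBsub p hp).finite)
  obtain ⟨a, ha⟩ := hBfin.infinite_compl.nonempty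
  refine ⟨a, fun p hp => ?_⟩
  rw [fiberImg_add_smul]
  by_cases hp' : p ∈ P'
  · intro hcontra
    apply ha
    exact Set.mem_biUnion hp' hcontra
  · -- linear independent case
    have hli : LinearIndependent (resField p) ![fiberImg p x, fiberImg p y] := by
      rw [hP'] at hp'
      simp only [Set.mem_setOf_eq, not_and, not_not] at hp'
      exact hp' hp
    rw [LinearIndependent.pair_iff] at hli
    intro hcontra
    have := hli 1 (φ p a) (by rw [one_smul]; exact hcontra)
    exact one_ne_zero this.1
end

section
/- Let R be a Noetherian ring containing an infinite field k as a subring, and let M be a finitely generated R-module generated by x_1, ..., x_n. If P is a finite subset of Supp_R M, then there exists an element y in the k-linear span of x_1, ..., x_n (i.e. y ∈ Σ_{i=1}^n k x_i) such that y(p) is nonzero for all p in P. -/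
open TensorProduct

variable {R : Type*} [CommRing R]

/-- **Lemma 2.1(2).** Let `R` be a Noetherian ring containing an infinite field `k` as a
subring and `M` a finitely generated `R`-module generated by `x₁, …, xₙ`.  If `P` is a
finite subset of `Supp_R M`, then there is `y ∈ Σᵢ k xᵢ` with `y(p) ≠ 0` for all `p ∈ P`. -/
theorem stmt1 [IsNoetherianRing R] [Nontrivial R]
    (k : Type*) [Field k] [Infinite k] [Algebra k R]
    (M : Type*) [AddCommGroup M] [Module R M] [Module.Finite R M]
    {n : ℕ} (xs : Fin n → M) (hgen : Submodule.span R (Set.range xs) = ⊤)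
    (P : Set (PrimeSpectrum R)) (hP : P ⊆ Module.support R M) (hfin : P.Finite) :
    ∃ c : Fin n → k, ∀ p ∈ P,
      fiberImg p (∑ i, algebraMap k R (c i) • xs i) ≠ 0 := by
  classical
  -- helper facts about fiberImg
  have himg : ∀ (p : PrimeSpectrum R) (x : M),
      fiberImg p x = TensorProduct.mk R (resField p) M 1 x := fun _ _ => rfl
  -- the bad set at each prime is a proper subspace of k^n
  have hnt : ∀ p ∈ P, Nontrivial (resField p ⊗[R] M) := by
    intro p hp
    have h1 : Nontrivial (LocalizedModule p.asIdeal.primeCompl M) := hP hp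
    let Rp := Localization.AtPrime p.asIdeal
    let e1 : Rp ⊗[R] M ≃ₗ[Rp] LocalizedModule p.asIdeal.primeCompl M :=
      (IsLocalizedModule.isBaseChange p.asIdeal.primeCompl Rp
        (LocalizedModule.mkLinearMap p.asIdeal.primeCompl M)).equiv
    haveI := h1
    have h2 : Nontrivial (Rp ⊗[R] M) := e1.toEquiv.nontrivial
    have h3 : Nontrivial (resField p ⊗[Rp] (Rp ⊗[R] M)) := by
      rw [← not_subsingleton_iff_nontrivial] at h2 ⊢
      exact fun h => h2 ((IsLocalRing.subsingleton_tensorProduct (R := Rp)).mp h)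
    haveI := h3
    exact ((TensorProduct.AlgebraTensorModule.cancelBaseChange R Rp (resField p)
      (resField p) M).symm.toEquiv.nontrivial)
  -- define the subspaces
  let V : PrimeSpectrum R → Submodule k (Fin n → k) := fun p =>
    { carrier := {c | fiberImg p (∑ i, algebraMap k R (c i) • xs i) = 0}
      add_mem' := by
        intro a b ha hb
        simp only [Set.mem_setOf_eq, himg] at ha hb ⊢
        have : (∑ i, algebraMap k R ((a + b) i) • xs i)
            = (∑ i, algebraMap k R (a i) • xs i) + (∑ i, algebraMap k R (b i) • xs i) := by
          rw [← Finset.sum_add_distrib]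
          refine Finset.sum_congr rfl fun i _ => ?_
          simp [map_add, add_smul]
        rw [this, map_add, ha, hb]
        exact add_zero _
      zero_mem' := by
        simp only [Set.mem_setOf_eq, himg]
        simp
        rfl
      smul_mem' := by
        intro a c hc
        simp only [Set.mem_setOf_eq, himg] at hc ⊢
        have : (∑ i, algebraMap k R ((a • c) i) • xs i)
            = algebraMap k R a • (∑ i, algebraMap k R (c i) • xs i) := by
          rw [Finset.smul_sum]
          refine Finset.sum_congr rfl fun i _ => ?_
          simp [map_mul, mul_smul]
        rw [this, map_smul, hc]
        exact smul_zero (M := R) (A := resField p ⊗[R] M) (algebraMap k R a) }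
  -- each V p (for p ∈ P) is proper
  have hVne : ∀ p ∈ P, V p ≠ ⊤ := by
    intro p hp hVtop
    have hker : ∀ j, TensorProduct.mk R (resField p) M 1 (xs j) = 0 := by
      intro j
      have hmem : (Pi.single j 1 : Fin n → k) ∈ V p := hVtop ▸ Submodule.mem_top
      have : fiberImg p (∑ i, algebraMap k R ((Pi.single j 1 : Fin n → k) i) • xs i) = 0 :=
        hmem
      rw [himg] at this
      rw [Finset.sum_eq_single j
          (fun i _ hi => by simp [Pi.single_eq_of_ne hi])
          (fun h => absurd (Finset.mem_univ j) h)] at this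
      simp at this
      exact this
    have hall : ∀ x : M, TensorProduct.mk R (resField p) M 1 x = 0 := by
      intro x
      have hx : x ∈ Submodule.span R (Set.range xs) := hgen ▸ Submodule.mem_top
      refine Submodule.span_induction ?_ ?_ ?_ ?_ hx
      · rintro _ ⟨j, rfl⟩; exact hker j
      · simp
      · intro y z _ _ hy hz; rw [map_add, hy, hz, add_zero]
      · intro r y _ hy; rw [map_smul, hy, smul_zero]
    have hsub : Subsingleton (resField p ⊗[R] M) := by
      rw [subsingleton_iff_forall_eq (0 : resField p ⊗[R] M)]
      intro z
      induction z using TensorProduct.induction_on with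
      | zero => rfl
      | tmul a x =>
        have : a ⊗ₜ[R] x = a • ((1 : resField p) ⊗ₜ[R] x) := by
          rw [TensorProduct.smul_tmul', smul_eq_mul, mul_one]
        rw [this, show (1 : resField p) ⊗ₜ[R] x = TensorProduct.mk R (resField p) M 1 x
          from rfl, hall x, smul_zero]
      | add y z hy hz => rw [hy, hz, add_zero]
    exact (not_subsingleton_iff_nontrivial.mpr (hnt p hp)) hsub
  -- a vector space over an infinite field is not a finite union of proper subspaces
  by_contra hcon
  push_neg at hcon
  have : Finite P := hfin.to_subtype
  have hcov : ⋃ p : P, ((V p : Submodule k (Fin n → k)) : Set (Fin n → k)) = Set.univ := by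
    refine Set.eq_univ_of_forall fun c => ?_
    obtain ⟨p, hp, hc⟩ := hcon c
    exact Set.mem_iUnion.mpr ⟨⟨p, hp⟩, hc⟩
  obtain ⟨⟨p, hp⟩, htop⟩ := Subspace.exists_eq_top_of_iUnion_eq_univ hcov
  exact hVne p hp htop
end
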